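/- arXiv:1111.3242 — 5 statements merged into one kernel-verified Lean document; each statement's English description precedes it below -/
import Mathlib

section
/- For every pairing π of a cyclic word of matrix entries arising from E[Tr[V^{2k}]] for a Gaussian matrix V, the product of Kronecker delta constraints imposed by π forces the first index to equal the last: E₀ = E_{2k}. More precisely: suppose indices E₀,...,E_{2k} ∈ Fin N are subject to, for each pair (i,j) in a perfect matching π of {0,...,2k-1}, the constraints E_i = E_{j+1} and E_{i+1} = E_j. Then E₀ = E_{2k}. -/
/-- If `π` is a perfect matching of `{0,…,2k-1}` (encoded by a fixed-point-free
involution `f`) and the indices `E₀,…,E_{2k}` satisfy the constraints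
`E_i = E_{f(i)+1}` and `E_{i+1} = E_{f(i)}` for every `i`, then `E₀ = E_{2k}`. -/
theorem first_eq_last_of_matching_constraints (k N : ℕ)
    (f : Fin (2 * k) → Fin (2 * k))
    (hinv : Function.Involutive f) (hfree : ∀ i, f i ≠ i)
    (E : Fin (2 * k + 1) → Fin N)
    (hconstr : ∀ i : Fin (2 * k),
      E i.castSucc = E (f i).succ ∧ E i.succ = E (f i).castSucc) :
    E 0 = E (Fin.last (2 * k)) := by
  set g : Fin (2*k+1) → Fin (2*k+1) := fun x =>
    if h : (x : ℕ) < 2*k then (f ⟨x, h⟩).succ else x with hg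
  have hE : ∀ x, E (g x) = E x := by
    intro x
    by_cases h : (x:ℕ) < 2*k
    · have hx : x = Fin.castSucc ⟨x, h⟩ := by ext; simp
      rw [hg]
      simp only [h, dif_pos]
      rw [← (hconstr ⟨x,h⟩).1, ← hx]
    · simp [hg, h]
  have hEiter : ∀ n (x : Fin (2*k+1)), E (g^[n] x) = E x := by
    intro n
    induction n with
    | zero => simp
    | succ n ih => intro x; rw [Function.iterate_succ_apply', hE, ih]
  have hlast : ∀ (y : Fin (2*k+1)), ¬ (y:ℕ) < 2*k → y = Fin.last (2*k) := by
    intro y hy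
    ext
    simp only [Fin.val_last]
    omega
  have key : ∀ m n : ℕ, m < n → g^[m] (0 : Fin (2*k+1)) = g^[n] 0 →
      ∃ j, g^[j] (0 : Fin (2*k+1)) = Fin.last (2*k) := by
    intro m
    induction m using Nat.strong_induction_on with
    | _ m ih =>
      intro n hlt heq
      match m, n with
      | 0, n+1 =>
        rw [Function.iterate_succ_apply'] at heq
        set y := g^[n] (0 : Fin (2*k+1)) with hy
        by_cases h : (y:ℕ) < 2*k
        · exfalso
          rw [hg] at heq
          simp only [h, dif_pos] at heq
          exact Fin.succ_ne_zero _ heq.symm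
        · exact ⟨n, hlast y h⟩
      | m+1, n+1 =>
        rw [Function.iterate_succ_apply', Function.iterate_succ_apply'] at heq
        set a := g^[m] (0 : Fin (2*k+1)) with ha
        set b := g^[n] (0 : Fin (2*k+1)) with hb
        by_cases hA : (a:ℕ) < 2*k
        · by_cases hB : (b:ℕ) < 2*k
          · have hab : a = b := by
              rw [hg] at heq
              simp only [hA, hB, dif_pos] at heq
              have h2 := hinv.injective (Fin.succ_injective _ heq)
              have h3 : (a:ℕ) = (b:ℕ) := by simpa using h2
              exact Fin.ext h3
            exact ih m (Nat.lt_succ_self m) n (by omega) (hab)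
          · exact ⟨n, hlast b hB⟩
        · exact ⟨m, hlast a hA⟩
  obtain ⟨m, n, hmn, heq⟩ : ∃ m n : ℕ, m ≠ n ∧ g^[m] (0 : Fin (2*k+1)) = g^[n] 0 := by
    obtain ⟨m, n, hmn, heq⟩ := Finite.exists_ne_map_eq_of_infinite
      (fun n : ℕ => g^[n] (0 : Fin (2*k+1)))
    exact ⟨m, n, hmn, heq⟩
  have hj : ∃ j, g^[j] (0 : Fin (2*k+1)) = Fin.last (2*k) := by
    rcases Nat.lt_or_ge m n with h | h
    · exact key m n h heq
    · exact key n m (by omega) heq.symm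
  obtain ⟨j, hj⟩ := hj
  rw [← hj, hEiter]
end

section
/- For a non-crossing perfect matching of 2k points with the index-identification constraints E_i = E_{j+1} and E_{i+1} = E_j for each matched pair (i,j), the number of equivalence classes of the indices E₀,...,E_{2k} (i.e., the number of free/independent index variables after imposing all constraints and the boundary identification) equals k + 1. -/
namespace NCAux

variable {k : ℕ}

/-- The "outside edge" relation: gap `i` ~ gap `f i + 1` for each left endpoint `i`. -/
def R2 (f : Fin (2 * k) → Fin (2 * k)) (a b : Fin (2 * k + 1)) : Prop :=
  ∃ i : Fin (2 * k), (i : ℕ) < (f i : ℕ) ∧ a = i.castSucc ∧ b = (f i).succ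

lemma eqvGen_mono' {α : Type*} {r s : α → α → Prop}
    (h : ∀ a b, r a b → Relation.EqvGen s a b) {a b : α}
    (hab : Relation.EqvGen r a b) : Relation.EqvGen s a b := by
  induction hab with
  | rel a b hr => exact h a b hr
  | refl a => exact Relation.EqvGen.refl a
  | symm a b _ ih => exact Relation.EqvGen.symm a b ih
  | trans a b c _ _ ih1 ih2 => exact Relation.EqvGen.trans a b c ih1 ih2

section

variable {f : Fin (2 * k) → Fin (2 * k)}
  (hinv : Function.Involutive f) (hfree : ∀ i, f i ≠ i)
  (hnc : ¬ ∃ i l : Fin (2 * k),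
      (i : ℕ) < (l : ℕ) ∧ (l : ℕ) < (f i : ℕ) ∧ (f i : ℕ) < (f l : ℕ))

include hinv hfree hnc in
/-- interior of an arc is closed under `f`. -/
lemma interior {a c : Fin (2 * k)} (h1 : (a : ℕ) < c) (h2 : (c : ℕ) < f a) :
    (a : ℕ) < f c ∧ (f c : ℕ) < f a := by
  push_neg at hnc
  constructor
  · rcases lt_trichotomy ((f c : ℕ)) ((a : ℕ)) with h | h | h
    · have h3 := hnc (f c) a h
      rw [hinv] at h3
      exact absurd (h3 h1) (by omega)
    · exfalso
      have h4 : f c = a := Fin.ext h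
      have h5 : c = f a := by rw [← h4, hinv]
      rw [h5] at h2; omega
    · exact h
  · rcases lt_trichotomy ((f c : ℕ)) ((f a : ℕ)) with h | h | h
    · exact h
    · exfalso
      have h4 : c = a := hinv.injective (Fin.ext h)
      omega
    · exact absurd (hnc a c h1 h2) (by omega)

include hinv hfree hnc in
/-- chain lemma: inside an arc `(a, b)`, any top-level gap `g` is `R2`-connected to gap `b`. -/
lemma chain {a b : Fin (2 * k)} (hab : f a = b) (hlt : (a : ℕ) < b) :
    ∀ n : ℕ, ∀ g : Fin (2 * k + 1), (a : ℕ) < g → (g : ℕ) ≤ b → (b : ℕ) - g ≤ n →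
      (∀ c : Fin (2 * k), (a : ℕ) < c → (c : ℕ) < g → (a : ℕ) < f c ∧ (f c : ℕ) < g) →
      Relation.EqvGen (R2 f) g b.castSucc := by
  intro n
  induction n with
  | zero =>
    intro g hg1 hg2 hg3 _
    have : g = b.castSucc := Fin.ext (by simp; omega)
    rw [this]
    exact Relation.EqvGen.refl _
  | succ n ih =>
    intro g hg1 hg2 hg3 hclosed
    rcases eq_or_lt_of_le hg2 with he | hlt2
    · have : g = b.castSucc := Fin.ext (by simp; omega)
      rw [this]; exact Relation.EqvGen.refl _
    · -- symbol at position g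
      have hg2k : (g : ℕ) < 2 * k := hlt2.trans b.isLt
      set c : Fin (2 * k) := ⟨(g : ℕ), hg2k⟩ with hc
      have hcv : (c : ℕ) = (g : ℕ) := rfl
      have hfcval := interior hinv hfree hnc (a := a) (c := c) (by omega) (by rw [hab]; omega)
      rw [hab] at hfcval
      -- show g < f c
      have hgfc : (g : ℕ) < (f c : ℕ) := by
        rcases lt_trichotomy ((f c : ℕ)) ((g : ℕ)) with h | h | h
        · exfalso
          have h5 := hclosed (f c) (hfcval.1) h
          rw [hinv] at h5
          omega
        · exact absurd (Fin.ext (h.trans rfl) : f c = c) (hfree c)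
        · exact h
      -- the edge
      have hedge : R2 f g ((f c).succ) := ⟨c, by omega, Fin.ext (by simp [Fin.coe_castSucc]; omega), rfl⟩
      refine Relation.EqvGen.trans _ _ _ (Relation.EqvGen.rel _ _ hedge) ?_
      apply ih ((f c).succ) (by simp only [Fin.val_succ]; omega) (by simp only [Fin.val_succ]; omega) (by simp only [Fin.val_succ]; omega)
      intro c' hc1 hc2
      simp only [Fin.val_succ] at hc2
      rcases lt_trichotomy ((c' : ℕ)) ((g : ℕ)) with h | h | h
      · have := hclosed c' hc1 h
        refine ⟨this.1, ?_⟩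
        simp only [Fin.val_succ]; omega
      · have : c' = c := Fin.ext (by simpa using h)
        rw [this]
        refine ⟨by omega, by simp only [Fin.val_succ]; omega⟩
      · rcases eq_or_lt_of_le (Nat.lt_succ_iff.mp (by omega : (c' : ℕ) < (f c : ℕ) + 1)) with h2 | h2
        · have : c' = f c := Fin.ext h2
          rw [this, hinv]
          refine ⟨by omega, by simp only [Fin.val_succ]; omega⟩
        · have := interior hinv hfree hnc (a := c) (c := c') (by simpa [hc] using h) h2
          constructor
          · omega
          · simp; omega

include hinv hfree hnc in
/-- each basic identification `gap i ~ gap (f i)+1` follows from `R2`. -/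
lemma r1_sub (i : Fin (2 * k)) :
    Relation.EqvGen (R2 f) i.castSucc ((f i).succ) := by
  rcases lt_trichotomy ((i : ℕ)) ((f i : ℕ)) with h | h | h
  · exact Relation.EqvGen.rel _ _ ⟨i, h, rfl, rfl⟩
  · exact absurd (Fin.ext h.symm : f i = i) (hfree i)
  · -- inside edge of arc (f i, i); use the chain from gap (f i)+1 up to gap i
    refine Relation.EqvGen.symm _ _ ?_
    have := chain hinv hfree hnc (a := f i) (b := i) (hinv i) h
      ((i : ℕ) - ((f i : ℕ) + 1)) ((f i).succ)
      (by simp only [Fin.val_succ]; omega) (by simp only [Fin.val_succ]; omega)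
      (by simp only [Fin.val_succ]; omega)
      (by intro c h1 h2; simp only [Fin.val_succ] at h2; omega)
    exact this

include hinv hfree hnc in
lemma eqv_iff {a b : Fin (2 * k + 1)} :
    Relation.EqvGen (fun a b : Fin (2 * k + 1) => ∃ i : Fin (2 * k),
        (a = i.castSucc ∧ b = (f i).succ) ∨ (a = i.succ ∧ b = (f i).castSucc)) a b ↔
    Relation.EqvGen (R2 f) a b := by
  constructor
  · refine eqvGen_mono' ?_
    rintro a b ⟨i, ⟨rfl, rfl⟩ | ⟨rfl, rfl⟩⟩
    · exact r1_sub hinv hfree hnc i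
    · have := r1_sub hinv hfree hnc (f i)
      rw [hinv i] at this
      exact Relation.EqvGen.symm _ _ this
  · refine eqvGen_mono' ?_
    rintro a b ⟨i, _, rfl, rfl⟩
    exact Relation.EqvGen.rel _ _ ⟨i, Or.inl ⟨rfl, rfl⟩⟩

end

section

variable (f : Fin (2 * k) → Fin (2 * k))

/-- the parent map: gap `(f i)+1` points to gap `i` when `i < f i`; roots are fixed. -/
noncomputable def par (v : Fin (2 * k + 1)) : Fin (2 * k + 1) :=
  if h : ∃ i : Fin (2 * k), (i : ℕ) < (f i : ℕ) ∧ v = (f i).succ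
  then h.choose.castSucc else v

noncomputable def root (v : Fin (2 * k + 1)) : Fin (2 * k + 1) := (par f)^[2 * k] v

variable {f}
variable (hinv : Function.Involutive f)

include hinv in
lemma par_eq {i : Fin (2 * k)} (h : (i : ℕ) < (f i : ℕ)) :
    par f ((f i).succ) = i.castSucc := by
  have hex : ∃ j : Fin (2 * k), (j : ℕ) < (f j : ℕ) ∧ (f i).succ = (f j).succ :=
    ⟨i, h, rfl⟩
  rw [par, dif_pos hex]
  obtain ⟨h1, h2⟩ := hex.choose_spec
  have : f hex.choose = f i := Fin.succ_injective _ h2.symm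
  rw [hinv.injective this]

lemma par_cases (v : Fin (2 * k + 1)) :
    par f v = v ∨ ((par f v : ℕ) < (v : ℕ) ∧ R2 f (par f v) v) := by
  rw [par]
  split
  · next h =>
    right
    obtain ⟨h1, h2⟩ := h.choose_spec
    constructor
    · have h2v : (v : ℕ) = ((f h.choose).succ : ℕ) := congrArg Fin.val h2
      simp only [Fin.coe_castSucc, Fin.val_succ] at *
      omega
    · exact ⟨h.choose, h1, rfl, h2⟩
  · left; rfl

lemma iter_fix : ∀ n : ℕ, ∀ v : Fin (2 * k + 1), (v : ℕ) ≤ n →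
    par f ((par f)^[n] v) = (par f)^[n] v := by
  intro n
  induction n with
  | zero =>
    intro v hv
    rcases par_cases (f := f) v with h | h
    · simpa using h
    · omega
  | succ n ih =>
    intro v hv
    rcases par_cases (f := f) v with h | h
    · rw [Function.iterate_fixed h]; exact h
    · rw [Function.iterate_succ_apply]
      exact ih (par f v) (by omega)

lemma root_fix (v : Fin (2 * k + 1)) : par f (root f v) = root f v :=
  iter_fix (2 * k) v (by omega)

lemma root_par (v : Fin (2 * k + 1)) : root f (par f v) = root f v := by
  have h1 : root f (par f v) = par f ((par f)^[2 * k] v) := by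
    rw [root, ← Function.iterate_succ_apply, Function.iterate_succ_apply']
  rw [h1]
  exact iter_fix (2 * k) v (by omega)

lemma eqv_root (v : Fin (2 * k + 1)) : Relation.EqvGen (R2 f) v (root f v) := by
  have key : ∀ n : ℕ, ∀ w : Fin (2 * k + 1), Relation.EqvGen (R2 f) w ((par f)^[n] w) := by
    intro n
    induction n with
    | zero => intro w; exact Relation.EqvGen.refl _
    | succ n ih =>
      intro w
      rw [Function.iterate_succ_apply]
      refine Relation.EqvGen.trans _ _ _ ?_ (ih (par f w))
      rcases par_cases (f := f) w with h | h
      · rw [h]; exact Relation.EqvGen.refl _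
      · exact Relation.EqvGen.symm _ _ (Relation.EqvGen.rel _ _ h.2)
  exact key (2 * k) v

include hinv in
lemma root_resp {a b : Fin (2 * k + 1)} (h : Relation.EqvGen (R2 f) a b) :
    root f a = root f b := by
  induction h with
  | rel a b hr =>
    obtain ⟨i, hi, rfl, rfl⟩ := hr
    rw [← par_eq hinv hi, root_par]
  | refl a => rfl
  | symm a b _ ih => exact ih.symm
  | trans a b c _ _ ih1 ih2 => exact ih1.trans ih2

include hinv in
lemma par_fix_iff (hfree : ∀ i, f i ≠ i) (v : Fin (2 * k + 1)) :
    par f v = v ↔ (v = 0 ∨ ∃ u : Fin (2 * k), (u : ℕ) < (f u : ℕ) ∧ v = u.succ) := by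
  constructor
  · intro hv
    by_cases h0 : (v : ℕ) = 0
    · exact Or.inl (Fin.ext h0)
    · right
      have hu : (v : ℕ) - 1 < 2 * k := by omega
      set u : Fin (2 * k) := ⟨(v : ℕ) - 1, hu⟩ with hudef
      have hvu : v = u.succ := Fin.ext (by show (v : ℕ) = (v : ℕ) - 1 + 1; omega)
      refine ⟨u, ?_, hvu⟩
      by_contra hle
      push_neg at hle
      have hne : (f u : ℕ) ≠ (u : ℕ) := fun h => hfree u (Fin.ext h)
      have hlt : (f u : ℕ) < (u : ℕ) := by omega
      have hp := par_eq hinv (i := f u) (by rw [hinv]; omega)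
      have hveq : (f (f u)).succ = v := by rw [hinv]; exact hvu.symm
      rw [hveq] at hp
      rw [hv] at hp
      have hval := congrArg Fin.val hp
      have hval2 := congrArg Fin.val hvu
      simp only [Fin.coe_castSucc, Fin.val_succ] at hval hval2
      have huv : (u : ℕ) = (v : ℕ) - 1 := rfl
      omega
  · rintro (rfl | ⟨u, hu, rfl⟩)
    · rw [par, dif_neg]
      rintro ⟨i, _, hi⟩
      have := congrArg Fin.val hi
      simp only [Fin.val_zero, Fin.val_succ] at this
      omega
    · rw [par, dif_neg]
      rintro ⟨i, hlt2, hi⟩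
      have h2 := congrArg Fin.val hi
      simp only [Fin.val_succ] at h2
      have hfi : f i = u := Fin.ext (by omega)
      have hiu : i = f u := by rw [← hfi, hinv]
      rw [hiu] at hlt2
      rw [hinv] at hlt2
      omega

include hinv in
lemma card_left (hfree : ∀ i, f i ≠ i) :
    (Finset.univ.filter (fun u : Fin (2 * k) => (u : ℕ) < (f u : ℕ))).card = k := by
  classical
  set S := Finset.univ.filter (fun u : Fin (2 * k) => (u : ℕ) < (f u : ℕ)) with hS
  set T := Finset.univ.filter (fun u : Fin (2 * k) => ¬ (u : ℕ) < (f u : ℕ)) with hT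
  have hST : S.card = T.card := by
    apply Finset.card_nbij' f f
    · intro u hu
      simp only [hS, Finset.mem_coe, Finset.mem_filter, Finset.mem_univ, true_and] at hu
      simp only [hT, Finset.mem_coe, Finset.mem_filter, Finset.mem_univ, true_and, hinv u]
      omega
    · intro u hu
      simp only [hT, Finset.mem_coe, Finset.mem_filter, Finset.mem_univ, true_and] at hu
      simp only [hS, Finset.mem_coe, Finset.mem_filter, Finset.mem_univ, true_and, hinv u]
      have : (f u : ℕ) ≠ (u : ℕ) := fun h => hfree u (Fin.ext h)
      omega
    · intro u _; exact hinv u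
    · intro u _; exact hinv u
  have hsum : S.card + T.card = 2 * k := by
    rw [hS, hT, Finset.card_filter_add_card_filter_not]
    simp
  omega

include hinv in
lemma card_roots (hfree : ∀ i, f i ≠ i) :
    Nat.card {v : Fin (2 * k + 1) // par f v = v} = k + 1 := by
  classical
  rw [Nat.card_eq_fintype_card, Fintype.card_subtype]
  have hfe : Finset.univ.filter (fun v : Fin (2 * k + 1) => par f v = v) =
      insert (0 : Fin (2 * k + 1))
        ((Finset.univ.filter (fun u : Fin (2 * k) => (u : ℕ) < (f u : ℕ))).image Fin.succ) := by
    ext v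
    simp only [Finset.mem_filter, Finset.mem_univ, true_and, Finset.mem_insert,
      Finset.mem_image]
    rw [par_fix_iff hinv hfree]
    constructor
    · rintro (rfl | ⟨u, hu, rfl⟩)
      · exact Or.inl rfl
      · exact Or.inr ⟨u, hu, rfl⟩
    · rintro (rfl | ⟨u, hu, rfl⟩)
      · exact Or.inl rfl
      · exact Or.inr ⟨u, hu, rfl⟩
  rw [hfe, Finset.card_insert_of_notMem, Finset.card_image_of_injective _ (Fin.succ_injective _),
    card_left hinv hfree]
  simp only [Finset.mem_image, Finset.mem_filter]
  rintro ⟨u, _, hu⟩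
  exact Fin.succ_ne_zero u hu

end
end NCAux

/-- For a non-crossing perfect matching of `2k` points (encoded by a fixed-point-free
involution `f`), the equivalence relation on the `2k+1` index variables `E₀,…,E_{2k}`
generated by the identifications `E_i ~ E_{f(i)+1}` and `E_{i+1} ~ E_{f(i)}`
has exactly `k + 1` equivalence classes. -/
theorem card_classes_noncrossing (k : ℕ)
    (f : Fin (2 * k) → Fin (2 * k))
    (hinv : Function.Involutive f) (hfree : ∀ i, f i ≠ i)
    (hnc : ¬ ∃ i l : Fin (2 * k),
      (i : ℕ) < (l : ℕ) ∧ (l : ℕ) < (f i : ℕ) ∧ (f i : ℕ) < (f l : ℕ)) :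
    Nat.card (Quotient (Relation.EqvGen.setoid
      (fun a b : Fin (2 * k + 1) => ∃ i : Fin (2 * k),
        (a = i.castSucc ∧ b = (f i).succ) ∨ (a = i.succ ∧ b = (f i).castSucc)))) =
      k + 1 := by
  classical
  set r := (fun a b : Fin (2 * k + 1) => ∃ i : Fin (2 * k),
        (a = i.castSucc ∧ b = (f i).succ) ∨ (a = i.succ ∧ b = (f i).castSucc)) with hr
  let e : Quotient (Relation.EqvGen.setoid r) ≃ {v : Fin (2 * k + 1) // NCAux.par f v = v} :=
  { toFun := Quotient.lift (fun v => (⟨NCAux.root f v, NCAux.root_fix v⟩ : {v : Fin (2 * k + 1) // NCAux.par f v = v}))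
      (fun a b hab => Subtype.ext (NCAux.root_resp hinv ((NCAux.eqv_iff hinv hfree hnc).mp hab)))
    invFun := fun w => Quotient.mk (Relation.EqvGen.setoid r) w.1
    left_inv := by
      rintro ⟨v⟩
      apply Quotient.sound
      exact (NCAux.eqv_iff hinv hfree hnc).mpr (Relation.EqvGen.symm _ _ (NCAux.eqv_root v))
    right_inv := by
      intro w
      apply Subtype.ext
      show NCAux.root f w.1 = w.1
      rw [NCAux.root]
      exact Function.iterate_fixed w.2 _ }
  rw [Nat.card_congr e]
  exact NCAux.card_roots hinv hfree
end

section
/- There is a constant C₁ such that for all real x, y, all η ∈ (0, 1/2), and C > 0: ∫_{−C}^{C} dα / (|x − α − iη| · |y − α − iη|) ≤ C₁ · |log η| / |x − y − iη|. -/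
open Complex intervalIntegral

noncomputable def hfun (η α : ℝ) : ℝ := (max |α| η)⁻¹

lemma hfun_cont {η : ℝ} (hη : 0 < η) : Continuous (hfun η) := by
  apply Continuous.inv₀ (by fun_prop); intro α; positivity

lemma hfun_nonneg (η α : ℝ) : 0 ≤ hfun η α := by unfold hfun; positivity

lemma hfun_even (η α : ℝ) : hfun η (-α) = hfun η α := by simp [hfun]

lemma hfun_intble {η : ℝ} (hη : 0 < η) (a b : ℝ) :
    IntervalIntegrable (hfun η) MeasureTheory.volume a b :=
  (hfun_cont hη).intervalIntegrable a b

lemma hfun_int_eq {η : ℝ} (hη : 0 < η) {L : ℝ} (hL : η ≤ L) :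
    ∫ t in (0:ℝ)..L, hfun η t = 1 + Real.log (L / η) := by
  rw [← integral_add_adjacent_intervals (b := η) (hfun_intble hη 0 η) (hfun_intble hη η L)]
  have h1 : ∫ t in (0:ℝ)..η, hfun η t = 1 := by
    rw [integral_congr (g := fun _ => η⁻¹)]
    · simp only [integral_const, smul_eq_mul, sub_zero]
      rw [mul_inv_cancel₀ hη.ne']
    · intro t ht
      rw [Set.uIcc_of_le hη.le] at ht
      have h1 : |t| = t := abs_of_nonneg ht.1
      simp [hfun, h1, max_eq_right ht.2]
  have h2 : ∫ t in η..L, hfun η t = Real.log (L / η) := by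
    rw [integral_congr (g := fun t => t⁻¹)]
    · exact integral_inv_of_pos hη (hη.trans_le hL)
    · intro t ht
      rw [Set.uIcc_of_le hL] at ht
      have h1 : |t| = t := abs_of_nonneg (hη.le.trans ht.1)
      simp [hfun, h1, max_eq_left ht.1]
  rw [h1, h2]

lemma hfun_int0_mono {η : ℝ} (hη : 0 < η) {s L : ℝ} (hs : 0 ≤ s) (hsL : s ≤ L) :
    ∫ t in (0:ℝ)..s, hfun η t ≤ ∫ t in (0:ℝ)..L, hfun η t := by
  rw [← integral_add_adjacent_intervals (b := s) (hfun_intble hη 0 s) (hfun_intble hη s L)]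
  have := integral_nonneg (μ := MeasureTheory.volume) (f := hfun η) hsL (fun t _ => hfun_nonneg η t)
  linarith

lemma hfun_shift {η : ℝ} (hη : 0 < η) {a b : ℝ} (ha : 0 ≤ a) (hab : a ≤ b) :
    ∫ t in a..b, hfun η t ≤ ∫ t in (0:ℝ)..(b - a), hfun η t := by
  have key : ∫ t in a..b, hfun η t = ∫ t in (0:ℝ)..(b - a), hfun η (t + a) := by
    rw [integral_comp_add_right (fun t => hfun η t) a]
    norm_num
  rw [key]
  apply integral_mono_on (by linarith) (((hfun_cont hη).comp (by fun_prop)).intervalIntegrable _ _)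
    (hfun_intble hη _ _)
  intro t ht
  have ht0 : 0 ≤ t := ht.1
  show hfun η (t + a) ≤ hfun η t
  unfold hfun
  apply inv_anti₀ (by positivity)
  apply max_le_max_right
  rw [_root_.abs_of_nonneg ht0, _root_.abs_of_nonneg (by linarith : (0:ℝ) ≤ t + a)]
  linarith

lemma hfun_refl (η u v : ℝ) : ∫ t in u..v, hfun η t = ∫ t in (-v)..(-u), hfun η t := by
  rw [← integral_comp_neg (fun t => hfun η t)]
  simp [hfun_even]

lemma hfun_main {η : ℝ} (hη : 0 < η) {u v : ℝ} (huv : u ≤ v) :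
    ∫ t in u..v, hfun η t ≤ 2 * ∫ t in (0:ℝ)..(v - u), hfun η t := by
  have base_nn : (0:ℝ) ≤ ∫ t in (0:ℝ)..(v - u), hfun η t :=
    integral_nonneg (by linarith) (fun t _ => hfun_nonneg η t)
  rcases le_or_gt 0 u with hu | hu
  · calc ∫ t in u..v, hfun η t ≤ ∫ t in (0:ℝ)..(v - u), hfun η t := hfun_shift hη hu huv
    _ ≤ 2 * ∫ t in (0:ℝ)..(v - u), hfun η t := by linarith
  · rcases le_or_gt v 0 with hv | hv
    · rw [hfun_refl]
      calc ∫ t in (-v)..(-u), hfun η t ≤ ∫ t in (0:ℝ)..(-u - -v), hfun η t :=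
            hfun_shift hη (by linarith) (by linarith)
      _ = ∫ t in (0:ℝ)..(v - u), hfun η t := by ring_nf
      _ ≤ 2 * ∫ t in (0:ℝ)..(v - u), hfun η t := by linarith
    · rw [← integral_add_adjacent_intervals (b := 0) (hfun_intble hη u 0) (hfun_intble hη 0 v)]
      have e1 : ∫ t in u..(0:ℝ), hfun η t = ∫ t in (0:ℝ)..(-u), hfun η t := by
        rw [hfun_refl]; norm_num
      rw [e1]
      have b1 : ∫ t in (0:ℝ)..(-u), hfun η t ≤ ∫ t in (0:ℝ)..(v - u), hfun η t :=
        hfun_int0_mono hη (by linarith) (by linarith)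
      have b2 : ∫ t in (0:ℝ)..v, hfun η t ≤ ∫ t in (0:ℝ)..(v - u), hfun η t :=
        hfun_int0_mono hη (by linarith) (by linarith)
      linarith

lemma norm_ge_max (x α η : ℝ) : max |α - x| η ≤ ‖(x:ℂ) - α - Complex.I * η‖ := by
  have him : ((x:ℂ) - α - Complex.I * η).im = -η := by simp
  have hre : ((x:ℂ) - α - Complex.I * η).re = x - α := by simp
  apply max_le
  · rw [abs_sub_comm, ← hre]
    exact Complex.abs_re_le_norm _
  · calc η ≤ |(-η)| := by rw [abs_neg]; exact le_abs_self η
    _ = |((x:ℂ) - α - Complex.I * η).im| := by rw [him]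
    _ ≤ ‖(x:ℂ) - α - Complex.I * η‖ := Complex.abs_im_le_norm _

lemma norm_pos_prop {η : ℝ} (hη : 0 < η) (x α : ℝ) :
    0 < ‖(x:ℂ) - α - Complex.I * η‖ :=
  lt_of_lt_of_le hη (le_trans (le_max_right _ _) (norm_ge_max x α η))

lemma prop_cont {η : ℝ} (hη : 0 < η) (x : ℝ) :
    Continuous (fun α : ℝ => ‖(x:ℂ) - α - Complex.I * η‖) := by fun_prop

lemma prop_bound (C : ℝ) (hC : 0 < C) {η : ℝ} (hη : 0 < η) (x : ℝ) :
    ∫ α in (-C)..C, ‖(x:ℂ) - α - Complex.I * η‖⁻¹ ≤ 2 * (1 + Real.log ((2*C + η) / η)) := by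
  have hcont : Continuous (fun α : ℝ => ‖(x:ℂ) - α - Complex.I * η‖⁻¹) :=
    Continuous.inv₀ (prop_cont hη x) (fun α => (norm_pos_prop hη x α).ne')
  have step1 : ∫ α in (-C)..C, ‖(x:ℂ) - α - Complex.I * η‖⁻¹
      ≤ ∫ α in (-C)..C, hfun η (α - x) := by
    apply integral_mono_on (by linarith) (hcont.intervalIntegrable _ _)
      (((hfun_cont hη).comp (by fun_prop)).intervalIntegrable _ _)
    intro α _
    exact inv_anti₀ (by positivity) (norm_ge_max x α η)
  have step2 : ∫ α in (-C)..C, hfun η (α - x) = ∫ t in (-C - x)..(C - x), hfun η t :=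
    integral_comp_sub_right (fun t => hfun η t) x
  have step3 : ∫ t in (-C - x)..(C - x), hfun η t ≤ 2 * ∫ t in (0:ℝ)..(2*C), hfun η t := by
    have := hfun_main hη (show -C - x ≤ C - x by linarith)
    have e : C - x - (-C - x) = 2*C := by ring
    rwa [e] at this
  have step4 : ∫ t in (0:ℝ)..(2*C), hfun η t ≤ ∫ t in (0:ℝ)..(2*C + η), hfun η t :=
    hfun_int0_mono hη (by linarith) (by linarith)
  have step5 : ∫ t in (0:ℝ)..(2*C + η), hfun η t = 1 + Real.log ((2*C + η) / η) :=
    hfun_int_eq hη (by linarith)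
  calc ∫ α in (-C)..C, ‖(x:ℂ) - α - Complex.I * η‖⁻¹ ≤ ∫ α in (-C)..C, hfun η (α - x) := step1
  _ = ∫ t in (-C - x)..(C - x), hfun η t := step2
  _ ≤ 2 * ∫ t in (0:ℝ)..(2*C), hfun η t := step3
  _ ≤ 2 * ∫ t in (0:ℝ)..(2*C + η), hfun η t := by linarith
  _ = 2 * (1 + Real.log ((2*C + η) / η)) := by rw [step5]

/-- There is a constant `C₁` (depending only on `C`) such that for all real `x, y` and
all `η ∈ (0, 1/2)`:
`∫_{−C}^{C} dα / (|x − α − iη| · |y − α − iη|) ≤ C₁ · |log η| / |x − y − iη|`. -/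
theorem two_propagator_log_bound (C : ℝ) (hC : 0 < C) :
    ∃ C₁ : ℝ, ∀ x y η : ℝ, 0 < η → η < 1 / 2 →
      ∫ α in (-C)..C,
          (‖(x : ℂ) - α - Complex.I * η‖ * ‖(y : ℂ) - α - Complex.I * η‖)⁻¹ ≤
        C₁ * |Real.log η| / ‖(x : ℂ) - y - Complex.I * η‖ := by
  refine ⟨8 * (1 + Real.log (2*C + 1)) / Real.log 2 + 8, fun x y η hη hη2 => ?_⟩
  set D := ‖(x:ℂ) - y - Complex.I * η‖ with hDdef
  have hzim : ((x:ℂ) - y - Complex.I * η).im = -η := by simp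
  have hD : 0 < D := by
    rw [hDdef, norm_pos_iff]
    intro h
    rw [h] at hzim
    simp at hzim
    linarith
  rw [le_div_iff₀ hD]
  set a : ℝ → ℝ := fun α => ‖(x:ℂ) - α - Complex.I * η‖ with ha_def
  set b : ℝ → ℝ := fun α => ‖(y:ℂ) - α - Complex.I * η‖ with hb_def
  have hapos : ∀ α, 0 < a α := fun α => norm_pos_prop hη x α
  have hbpos : ∀ α, 0 < b α := fun α => norm_pos_prop hη y α
  have haC : Continuous a := prop_cont hη x
  have hbC : Continuous b := prop_cont hη y
  have hainv : Continuous (fun α => (a α)⁻¹) :=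
    Continuous.inv₀ haC (fun α => (hapos α).ne')
  have hbinv : Continuous (fun α => (b α)⁻¹) :=
    Continuous.inv₀ hbC (fun α => (hbpos α).ne')
  have hcont : Continuous (fun α => (a α * b α)⁻¹) :=
    Continuous.inv₀ (haC.mul hbC) (fun α => (mul_pos (hapos α) (hbpos α)).ne')
  rw [← integral_mul_const]
  have pt : ∀ α ∈ Set.Icc (-C) C, (a α * b α)⁻¹ * D ≤ 2 * (b α)⁻¹ + 2 * (a α)⁻¹ := by
    intro α _
    have hxy : ‖(x:ℂ) - (y:ℂ)‖ ≤ a α + b α := by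
      have e : (x:ℂ) - y = ((x:ℂ) - α - Complex.I*η) - ((y:ℂ) - α - Complex.I*η) := by ring
      rw [e]
      exact norm_sub_le _ _
    have hDle : D ≤ ‖(x:ℂ) - (y:ℂ)‖ + η := by
      have e : (x:ℂ) - y - Complex.I*η = ((x:ℂ) - y) - Complex.I*η := by ring
      rw [hDdef, e]
      calc ‖((x:ℂ) - y) - Complex.I*(η:ℂ)‖ ≤ ‖(x:ℂ) - y‖ + ‖Complex.I*(η:ℂ)‖ := norm_sub_le _ _
      _ = ‖(x:ℂ) - (y:ℂ)‖ + η := by simp [abs_of_pos hη]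
    have hηa : η ≤ a α := le_trans (le_max_right _ _) (norm_ge_max x α η)
    have hb0 := (hbpos α).le
    have h1 : D ≤ 2 * (a α + b α) := by linarith
    have h2 := mul_le_mul_of_nonneg_left h1
      (inv_nonneg.mpr (mul_nonneg (hapos α).le (hbpos α).le))
    refine le_trans h2 ?_
    have e2 : (a α * b α)⁻¹ * (2 * (a α + b α)) = 2 * (b α)⁻¹ + 2 * (a α)⁻¹ := by
      have ha' := (hapos α).ne'
      have hb' := (hbpos α).ne'
      field_simp
    rw [e2]
  have hint1 : ∫ α in (-C)..C, (a α * b α)⁻¹ * D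
      ≤ ∫ α in (-C)..C, (2 * (b α)⁻¹ + 2 * (a α)⁻¹) := by
    apply integral_mono_on (by linarith) ((hcont.mul continuous_const).intervalIntegrable _ _)
      (((continuous_const.mul hbinv).add (continuous_const.mul hainv)).intervalIntegrable _ _)
    exact pt
  have hsplit : ∫ α in (-C)..C, (2 * (b α)⁻¹ + 2 * (a α)⁻¹)
      = 2 * (∫ α in (-C)..C, (b α)⁻¹) + 2 * (∫ α in (-C)..C, (a α)⁻¹) := by
    rw [integral_add (f := fun α => 2 * (b α)⁻¹) (g := fun α => 2 * (a α)⁻¹) ((continuous_const.mul hbinv).intervalIntegrable _ _)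
      ((continuous_const.mul hainv).intervalIntegrable _ _),
      integral_const_mul, integral_const_mul]
  have hb_bd := prop_bound C hC hη y
  have ha_bd := prop_bound C hC hη x
  have total : ∫ α in (-C)..C, (a α * b α)⁻¹ * D ≤ 8 * (1 + Real.log ((2*C + η) / η)) := by
    rw [hsplit] at hint1
    calc ∫ α in (-C)..C, (a α * b α)⁻¹ * D
        ≤ 2 * (∫ α in (-C)..C, (b α)⁻¹) + 2 * (∫ α in (-C)..C, (a α)⁻¹) := hint1
    _ ≤ 2 * (2 * (1 + Real.log ((2*C + η) / η))) + 2 * (2 * (1 + Real.log ((2*C + η) / η))) := by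
        have hbb : (∫ α in (-C)..C, (b α)⁻¹) ≤ 2 * (1 + Real.log ((2*C + η) / η)) := hb_bd
        have haa : (∫ α in (-C)..C, (a α)⁻¹) ≤ 2 * (1 + Real.log ((2*C + η) / η)) := ha_bd
        linarith
    _ = 8 * (1 + Real.log ((2*C + η) / η)) := by ring
  refine total.trans ?_
  -- arithmetic
  have hlog2 : (0:ℝ) < Real.log 2 := Real.log_pos (by norm_num)
  have hlogC : 0 ≤ Real.log (2*C + 1) := Real.log_nonneg (by linarith)
  have h2 : (2:ℝ) ≤ η⁻¹ := by
    rw [show (2:ℝ) = (1/2)⁻¹ by norm_num]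
    exact inv_anti₀ hη (by linarith)
  have hM : Real.log 2 ≤ |Real.log η| := by
    have h3 : Real.log 2 ≤ Real.log η⁻¹ := Real.log_le_log (by norm_num) h2
    rw [Real.log_inv] at h3
    calc Real.log 2 ≤ -Real.log η := h3
    _ ≤ |Real.log η| := neg_le_abs _
  have hsplitlog : Real.log ((2*C + η) / η) = Real.log (2*C + η) - Real.log η :=
    Real.log_div (by positivity) hη.ne'
  have hmono : Real.log (2*C + η) ≤ Real.log (2*C + 1) :=
    Real.log_le_log (by positivity) (by linarith)
  have key : 8 * (1 + Real.log (2*C + 1))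
      ≤ 8 * (1 + Real.log (2*C + 1)) / Real.log 2 * |Real.log η| := by
    rw [div_mul_eq_mul_div, le_div_iff₀ hlog2]
    have hA : 0 ≤ 8 * (1 + Real.log (2*C + 1)) := by linarith
    nlinarith [mul_le_mul_of_nonneg_left hM hA]
  rw [add_mul, hsplitlog]
  have hneg : -Real.log η ≤ |Real.log η| := neg_le_abs _
  linarith
end

section
/- For every δ ∈ (0,1) and C > 0 there exists a constant C₁ such that for all real x, y and η > 0: ∫_{−C}^{C} dα / (|x − α − iη|^δ · |y − α − iη|^δ) ≤ C₁ / |x − y − iη|^δ. -/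
open Complex intervalIntegral

open MeasureTheory Set in
private lemma abs_rpow_intervalIntegrable {δ : ℝ} (hδ1 : δ < 1) (a b : ℝ) :
    IntervalIntegrable (fun t : ℝ => |t| ^ (-δ)) volume a b := by
  have key : ∀ c : ℝ, 0 ≤ c → IntervalIntegrable (fun t : ℝ => |t| ^ (-δ)) volume 0 c := by
    intro c hc
    have h1 : IntervalIntegrable (fun t : ℝ => t ^ (-δ)) volume 0 c :=
      intervalIntegrable_rpow' (by linarith)
    rw [intervalIntegrable_iff, uIoc_of_le hc] at h1 ⊢
    refine h1.congr_fun (fun t ht => ?_) measurableSet_Ioc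
    simp only [_root_.abs_of_pos ht.1]
  have gen : ∀ c : ℝ, IntervalIntegrable (fun t : ℝ => |t| ^ (-δ)) volume 0 c := by
    intro c
    rcases le_total 0 c with hc | hc
    · exact key c hc
    · have h2 := (IntervalIntegrable.iff_comp_neg (h := enorm_ne_top)).mp (key (-c) (by linarith))
      simpa using h2
  exact (gen a).symm.trans (gen b)

private lemma abs_rpow_integral_zero {δ : ℝ} (hδ0 : 0 < δ) (hδ1 : δ < 1) {c : ℝ} (hc : 0 ≤ c) :
    ∫ t in (0:ℝ)..c, |t| ^ (-δ) = c ^ (1 - δ) / (1 - δ) := by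
  have h : ∫ t in (0:ℝ)..c, |t| ^ (-δ) = ∫ t in (0:ℝ)..c, t ^ (-δ) := by
    apply intervalIntegral.integral_congr
    intro t ht
    rw [Set.uIcc_of_le hc] at ht
    simp only [_root_.abs_of_nonneg ht.1]
  rw [h, integral_rpow (Or.inl (by linarith))]
  rw [Real.zero_rpow (by linarith : -δ + 1 ≠ 0)]
  ring_nf

private lemma abs_rpow_integral_bound {δ : ℝ} (hδ0 : 0 < δ) (hδ1 : δ < 1)
    {a b : ℝ} (hab : a ≤ b) :
    ∫ t in a..b, |t| ^ (-δ) ≤ 2 * (b - a) ^ (1 - δ) / (1 - δ) := by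
  have hp : 0 < 1 - δ := by linarith
  -- reflection identity
  have refl : ∀ u v : ℝ, (∫ t in u..v, |t| ^ (-δ)) = ∫ t in (-v)..(-u), |t| ^ (-δ) := by
    intro u v
    have h := intervalIntegral.integral_comp_neg (a := u) (b := v)
      (f := fun t : ℝ => |t| ^ (-δ))
    simpa using h
  have main : ∀ u v : ℝ, 0 ≤ u → u ≤ v →
      ∫ t in u..v, |t| ^ (-δ) ≤ 2 * (v - u) ^ (1 - δ) / (1 - δ) := by
    intro u v hu huv
    have h : ∫ t in u..v, |t| ^ (-δ) = ∫ t in u..v, t ^ (-δ) := by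
      apply intervalIntegral.integral_congr
      intro t ht
      rw [Set.uIcc_of_le huv] at ht
      simp only [_root_.abs_of_nonneg (le_trans hu ht.1)]
    rw [h, integral_rpow (Or.inl (by linarith))]
    have sub : v ^ (-δ + 1) ≤ u ^ (-δ + 1) + (v - u) ^ (-δ + 1) := by
      have hnn := NNReal.rpow_add_le_add_rpow u.toNNReal (v - u).toNNReal
        (by linarith : (0:ℝ) ≤ -δ + 1) (by linarith : -δ + 1 ≤ 1)
      rw [← Real.toNNReal_add hu (by linarith)] at hnn
      have huv' : u + (v - u) = v := by ring
      rw [huv'] at hnn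
      have := NNReal.coe_le_coe.mpr hnn
      push_cast at this
      rwa [Real.coe_toNNReal _ (by linarith), Real.coe_toNNReal _ hu,
        Real.coe_toNNReal _ (by linarith)] at this
    have hpos : (0:ℝ) < -δ + 1 := by linarith
    rw [div_le_div_iff₀ hpos (by linarith : (0:ℝ) < 1 - δ)]
    have hnn2 : 0 ≤ (v - u) ^ (-δ + 1) := Real.rpow_nonneg (by linarith) _
    have hnn3 : 0 ≤ u ^ (-δ + 1) := Real.rpow_nonneg hu _
    have heq : (v - u) ^ (-δ + 1) = (v - u) ^ (1 - δ) := by ring_nf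
    nlinarith
  rcases le_total 0 a with ha | ha
  · exact main a b ha hab
  rcases le_total b 0 with hb | hb
  · rw [refl a b]
    have := main (-b) (-a) (by linarith) (by linarith)
    have he : -a - -b = b - a := by ring
    rwa [he] at this
  · -- a ≤ 0 ≤ b
    rw [← intervalIntegral.integral_add_adjacent_intervals
      (abs_rpow_intervalIntegrable hδ1 a 0) (abs_rpow_intervalIntegrable hδ1 0 b)]
    have h1 : ∫ t in a..(0:ℝ), |t| ^ (-δ) = (-a) ^ (1 - δ) / (1 - δ) := by
      rw [refl a 0]
      simpa using abs_rpow_integral_zero hδ0 hδ1 (by linarith : (0:ℝ) ≤ -a)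
    have h2 : ∫ t in (0:ℝ)..b, |t| ^ (-δ) = b ^ (1 - δ) / (1 - δ) :=
      abs_rpow_integral_zero hδ0 hδ1 hb
    rw [h1, h2]
    have hb1 : (-a) ^ (1 - δ) ≤ (b - a) ^ (1 - δ) :=
      Real.rpow_le_rpow (by linarith) (by linarith) hp.le
    have hb2 : b ^ (1 - δ) ≤ (b - a) ^ (1 - δ) :=
      Real.rpow_le_rpow hb (by linarith) hp.le
    rw [← add_div, div_le_div_iff₀ hp hp]
    nlinarith

/-- For every `δ ∈ (0,1)` and `C > 0` there is a constant `C₁` such that for all real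
`x, y` and all `η > 0`:
`∫_{−C}^{C} dα / (|x − α − iη|^δ · |y − α − iη|^δ) ≤ C₁ / |x − y − iη|^δ`. -/
theorem two_propagator_rpow_bound (δ : ℝ) (hδ0 : 0 < δ) (hδ1 : δ < 1)
    (C : ℝ) (hC : 0 < C) :
    ∃ C₁ : ℝ, ∀ x y η : ℝ, 0 < η →
      ∫ α in (-C)..C,
          (‖(x : ℂ) - α - Complex.I * η‖ ^ δ * ‖(y : ℂ) - α - Complex.I * η‖ ^ δ)⁻¹ ≤
        C₁ / ‖(x : ℂ) - y - Complex.I * η‖ ^ δ := by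
  have hp : 0 < 1 - δ := by linarith
  refine ⟨2 ^ δ * (4 * (2 * C) ^ (1 - δ) / (1 - δ)), fun x y η hη => ?_⟩
  -- basic norm facts
  have hnorm : ∀ u v : ℝ, η ≤ ‖(u : ℂ) - v - Complex.I * η‖ := by
    intro u v
    have h := Complex.abs_im_le_norm ((u : ℂ) - v - Complex.I * η)
    have him : ((u : ℂ) - v - Complex.I * η).im = -η := by simp
    rw [him, abs_neg, _root_.abs_of_pos hη] at h
    exact h
  have hre : ∀ u v : ℝ, |u - v| ≤ ‖(u : ℂ) - v - Complex.I * η‖ := by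
    intro u v
    have h := Complex.abs_re_le_norm ((u : ℂ) - v - Complex.I * η)
    have hre' : ((u : ℂ) - v - Complex.I * η).re = u - v := by simp
    rw [hre'] at h
    exact h
  set W : ℝ := ‖(x : ℂ) - y - Complex.I * η‖ with hWdef
  have hW : 0 < W := lt_of_lt_of_le hη (hnorm x y)
  have hA : ∀ α : ℝ, 0 < ‖(x : ℂ) - α - Complex.I * η‖ := fun α =>
    lt_of_lt_of_le hη (hnorm x α)
  have hB : ∀ α : ℝ, 0 < ‖(y : ℂ) - α - Complex.I * η‖ := fun α =>
    lt_of_lt_of_le hη (hnorm y α)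
  -- triangle inequality
  have htri : ∀ α : ℝ, W ≤ ‖(x : ℂ) - α - Complex.I * η‖ + ‖(y : ℂ) - α - Complex.I * η‖ := by
    intro α
    have h1 : (x : ℂ) - y - Complex.I * η =
        ((x : ℂ) - α - Complex.I * η) - ((y : ℂ) - α) := by ring
    have h2 : ‖(y : ℂ) - (α : ℂ)‖ = |y - α| := by
      rw [show (y : ℂ) - (α : ℂ) = ((y - α : ℝ) : ℂ) by push_cast; ring, Complex.norm_real, Real.norm_eq_abs]
    calc W = ‖((x : ℂ) - α - Complex.I * η) - ((y : ℂ) - α)‖ := by rw [hWdef, h1]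
    _ ≤ ‖(x : ℂ) - α - Complex.I * η‖ + ‖(y : ℂ) - (α : ℂ)‖ := norm_sub_le _ _
    _ ≤ _ := by rw [h2]; exact add_le_add_right (hre y α) _
  -- a.e. pointwise bound
  have hae : ∀ᵐ α : ℝ,
      (‖(x : ℂ) - α - Complex.I * η‖ ^ δ * ‖(y : ℂ) - α - Complex.I * η‖ ^ δ)⁻¹ ≤
      2 ^ δ * W ^ (-δ) * (|x - α| ^ (-δ) + |y - α| ^ (-δ)) := by
    have hxae : ∀ᵐ α : ℝ, α ≠ x := by
      have : MeasureTheory.volume ({x} : Set ℝ) = 0 := MeasureTheory.measure_singleton x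
      filter_upwards [MeasureTheory.measure_eq_zero_iff_ae_notMem.mp this] with α hα
      simpa using hα
    have hyae : ∀ᵐ α : ℝ, α ≠ y := by
      have : MeasureTheory.volume ({y} : Set ℝ) = 0 := MeasureTheory.measure_singleton y
      filter_upwards [MeasureTheory.measure_eq_zero_iff_ae_notMem.mp this] with α hα
      simpa using hα
    filter_upwards [hxae, hyae] with α hαx hαy
    have haxpos : 0 < |x - α| := abs_pos.mpr (sub_ne_zero.mpr (Ne.symm hαx))
    have haypos : 0 < |y - α| := abs_pos.mpr (sub_ne_zero.mpr (Ne.symm hαy))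
    have lhs_eq : (‖(x : ℂ) - α - Complex.I * η‖ ^ δ * ‖(y : ℂ) - α - Complex.I * η‖ ^ δ)⁻¹ =
        ‖(x : ℂ) - α - Complex.I * η‖ ^ (-δ) * ‖(y : ℂ) - α - Complex.I * η‖ ^ (-δ) := by
      rw [Real.rpow_neg (hA α).le, Real.rpow_neg (hB α).le, mul_inv]
    rw [lhs_eq]
    have hhalf : (W / 2) ^ (-δ) = 2 ^ δ * W ^ (-δ) := by
      rw [Real.div_rpow hW.le (by norm_num : (0:ℝ) ≤ 2),
        Real.rpow_neg (by norm_num : (0:ℝ) ≤ 2), div_eq_mul_inv, inv_inv, mul_comm]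
    have hA' : ‖(x : ℂ) - α - Complex.I * η‖ ^ (-δ) ≤ |x - α| ^ (-δ) :=
      Real.rpow_le_rpow_of_nonpos haxpos (hre x α) (by linarith)
    have hB' : ‖(y : ℂ) - α - Complex.I * η‖ ^ (-δ) ≤ |y - α| ^ (-δ) :=
      Real.rpow_le_rpow_of_nonpos haypos (hre y α) (by linarith)
    rcases le_total ‖(x : ℂ) - α - Complex.I * η‖ ‖(y : ℂ) - α - Complex.I * η‖ with hAB | hAB
    · have hWB : W / 2 ≤ ‖(y : ℂ) - α - Complex.I * η‖ := by
        have := htri α; linarith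
      have hB2 : ‖(y : ℂ) - α - Complex.I * η‖ ^ (-δ) ≤ 2 ^ δ * W ^ (-δ) := by
        rw [← hhalf]
        exact Real.rpow_le_rpow_of_nonpos (by positivity) hWB (by linarith)
      calc ‖(x : ℂ) - α - Complex.I * η‖ ^ (-δ) * ‖(y : ℂ) - α - Complex.I * η‖ ^ (-δ)
          ≤ |x - α| ^ (-δ) * (2 ^ δ * W ^ (-δ)) :=
            mul_le_mul hA' hB2 (Real.rpow_nonneg (hB α).le _)
              (Real.rpow_nonneg (abs_nonneg _) _)
      _ ≤ 2 ^ δ * W ^ (-δ) * (|x - α| ^ (-δ) + |y - α| ^ (-δ)) := by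
          rw [mul_comm]
          refine mul_le_mul_of_nonneg_left ?_ (by positivity)
          exact le_add_of_nonneg_right (Real.rpow_nonneg (abs_nonneg _) _)
    · have hWA : W / 2 ≤ ‖(x : ℂ) - α - Complex.I * η‖ := by
        have := htri α; linarith
      have hA2 : ‖(x : ℂ) - α - Complex.I * η‖ ^ (-δ) ≤ 2 ^ δ * W ^ (-δ) := by
        rw [← hhalf]
        exact Real.rpow_le_rpow_of_nonpos (by positivity) hWA (by linarith)
      calc ‖(x : ℂ) - α - Complex.I * η‖ ^ (-δ) * ‖(y : ℂ) - α - Complex.I * η‖ ^ (-δ)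
          ≤ (2 ^ δ * W ^ (-δ)) * |y - α| ^ (-δ) :=
            mul_le_mul hA2 hB' (Real.rpow_nonneg (hB α).le _) (by positivity)
      _ ≤ 2 ^ δ * W ^ (-δ) * (|x - α| ^ (-δ) + |y - α| ^ (-δ)) := by
          refine mul_le_mul_of_nonneg_left ?_ (by positivity)
          exact le_add_of_nonneg_left (Real.rpow_nonneg (abs_nonneg _) _)
  -- integrability
  have hc1 : Continuous fun α : ℝ => ‖(x : ℂ) - α - Complex.I * η‖ :=
    ((continuous_const.sub Complex.continuous_ofReal).sub continuous_const).norm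
  have hc2 : Continuous fun α : ℝ => ‖(y : ℂ) - α - Complex.I * η‖ :=
    ((continuous_const.sub Complex.continuous_ofReal).sub continuous_const).norm
  have hfint : IntervalIntegrable
      (fun α : ℝ => (‖(x : ℂ) - α - Complex.I * η‖ ^ δ * ‖(y : ℂ) - α - Complex.I * η‖ ^ δ)⁻¹)
      MeasureTheory.volume (-C) C := by
    apply Continuous.intervalIntegrable
    refine Continuous.inv₀ ((hc1.rpow_const fun α => Or.inr hδ0.le).mul
      (hc2.rpow_const fun α => Or.inr hδ0.le)) fun α => ?_
    exact (mul_pos (Real.rpow_pos_of_pos (hA α) δ) (Real.rpow_pos_of_pos (hB α) δ)).ne'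
  have hgx : IntervalIntegrable (fun α : ℝ => |x - α| ^ (-δ)) MeasureTheory.volume (-C) C := by
    have h := (abs_rpow_intervalIntegrable hδ1 (x + C) (x - C)).comp_sub_left x
    have e1 : x - (x + C) = -C := by ring
    have e2 : x - (x - C) = C := by ring
    rwa [e1, e2] at h
  have hgy : IntervalIntegrable (fun α : ℝ => |y - α| ^ (-δ)) MeasureTheory.volume (-C) C := by
    have h := (abs_rpow_intervalIntegrable hδ1 (y + C) (y - C)).comp_sub_left y
    have e1 : y - (y + C) = -C := by ring
    have e2 : y - (y - C) = C := by ring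
    rwa [e1, e2] at h
  have hGint : IntervalIntegrable
      (fun α : ℝ => 2 ^ δ * W ^ (-δ) * (|x - α| ^ (-δ) + |y - α| ^ (-δ)))
      MeasureTheory.volume (-C) C := (hgx.add hgy).const_mul _
  -- integral bounds for the two pieces
  have hix : (∫ α in (-C)..C, |x - α| ^ (-δ)) ≤ 2 * (2 * C) ^ (1 - δ) / (1 - δ) := by
    have h := intervalIntegral.integral_comp_sub_left (a := -C) (b := C)
      (fun t : ℝ => |t| ^ (-δ)) x
    rw [show x - -C = x + C by ring] at h
    rw [h]
    have hb := abs_rpow_integral_bound hδ0 hδ1 (show x - C ≤ x + C by linarith)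
    rwa [show x + C - (x - C) = 2 * C by ring] at hb
  have hiy : (∫ α in (-C)..C, |y - α| ^ (-δ)) ≤ 2 * (2 * C) ^ (1 - δ) / (1 - δ) := by
    have h := intervalIntegral.integral_comp_sub_left (a := -C) (b := C)
      (fun t : ℝ => |t| ^ (-δ)) y
    rw [show y - -C = y + C by ring] at h
    rw [h]
    have hb := abs_rpow_integral_bound hδ0 hδ1 (show y - C ≤ y + C by linarith)
    rwa [show y + C - (y - C) = 2 * C by ring] at hb
  have hdiv : (2 ^ δ * (4 * (2 * C) ^ (1 - δ) / (1 - δ))) / W ^ δ =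
      2 ^ δ * W ^ (-δ) * (2 * (2 * C) ^ (1 - δ) / (1 - δ) + 2 * (2 * C) ^ (1 - δ) / (1 - δ)) := by
    rw [Real.rpow_neg hW.le, div_eq_mul_inv]
    ring
  rw [hdiv]
  calc (∫ α in (-C)..C,
        (‖(x : ℂ) - α - Complex.I * η‖ ^ δ * ‖(y : ℂ) - α - Complex.I * η‖ ^ δ)⁻¹)
      ≤ ∫ α in (-C)..C, 2 ^ δ * W ^ (-δ) * (|x - α| ^ (-δ) + |y - α| ^ (-δ)) :=
        intervalIntegral.integral_mono_ae (by linarith) hfint hGint hae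
    _ = 2 ^ δ * W ^ (-δ) *
        ((∫ α in (-C)..C, |x - α| ^ (-δ)) + ∫ α in (-C)..C, |y - α| ^ (-δ)) := by
        rw [intervalIntegral.integral_const_mul, intervalIntegral.integral_add hgx hgy]
    _ ≤ _ := by
        refine mul_le_mul_of_nonneg_left (add_le_add hix hiy) (by positivity)
end

section
/- For real α, η > 0 and ω̄ ∈ (0,1), with Θ(α,η) = ∫₀¹ dω/(ω − α − iη) and Θ(ω̄) = lim_{η'→0⁺} ∫₀¹ dω/(ω − ω̄ − iη'), the difference satisfies |Θ(α,η) − Θ(ω̄)| ≤ |ω̄ − α − iη| · (1/|1 − α − iη| + 1/|1 − ω̄| + 1/|α + iη| + 1/|ω̄|). -/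
set_option maxHeartbeats 1000000

open Complex intervalIntegral Filter

lemma log_lip {z₁ z₂ : ℂ} (h₁ : z₁.im < 0) (h₂ : z₂.im < 0) :
    ‖Complex.log z₁ - Complex.log z₂‖ ≤ ‖z₁ - z₂‖ * (1 / ‖z₁‖ + 1 / ‖z₂‖) := by
  have hz₁ : z₁ ≠ 0 := fun h => by simp [h] at h₁
  have hz₂ : z₂ ≠ 0 := fun h => by simp [h] at h₂
  set r₁ := ‖z₁‖ with hr₁def
  set r₂ := ‖z₂‖ with hr₂def
  have hr₁ : 0 < r₁ := norm_pos_iff.mpr hz₁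
  have hr₂ : 0 < r₂ := norm_pos_iff.mpr hz₂
  set a₁ := Complex.arg z₁ with ha₁def
  set a₂ := Complex.arg z₂ with ha₂def
  have ha₁l : -Real.pi < a₁ := Complex.neg_pi_lt_arg z₁
  have ha₁u : a₁ < 0 := Complex.arg_neg_iff.2 h₁
  have ha₂l : -Real.pi < a₂ := Complex.neg_pi_lt_arg z₂
  have ha₂u : a₂ < 0 := Complex.arg_neg_iff.2 h₂
  set S := 1 / r₁ + 1 / r₂ with hSdef
  have hS : 0 < S := by positivity
  have hS1 : 1 ≤ S * r₁ := by
    rw [hSdef, add_mul, one_div_mul_cancel hr₁.ne']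
    linarith [mul_pos (show (0:ℝ) < 1 / r₂ by positivity) hr₁]
  have hS2 : 1 ≤ S * r₂ := by
    rw [hSdef, add_mul, one_div_mul_cancel hr₂.ne']
    linarith [mul_pos (show (0:ℝ) < 1 / r₁ by positivity) hr₂]
  have e1 : ‖Complex.log z₁ - Complex.log z₂‖ ^ 2
      = (Real.log r₁ - Real.log r₂) ^ 2 + (a₁ - a₂) ^ 2 := by
    rw [Complex.sq_norm, Complex.normSq_apply]
    simp only [Complex.sub_re, Complex.sub_im, Complex.log_re, Complex.log_im]
    rw [← hr₁def, ← hr₂def, ← ha₁def, ← ha₂def]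
    ring
  have hn1 : r₁ ^ 2 = z₁.re ^ 2 + z₁.im ^ 2 := by
    rw [hr₁def, Complex.sq_norm, Complex.normSq_apply]; ring
  have hn2 : r₂ ^ 2 = z₂.re ^ 2 + z₂.im ^ 2 := by
    rw [hr₂def, Complex.sq_norm, Complex.normSq_apply]; ring
  have hc : Real.cos (a₁ - a₂) * (r₁ * r₂) = z₁.re * z₂.re + z₁.im * z₂.im := by
    rw [Real.cos_sub, ha₁def, ha₂def, Complex.cos_arg hz₁, Complex.cos_arg hz₂,
      Complex.sin_arg, Complex.sin_arg, ← hr₁def, ← hr₂def]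
    field_simp
  have e2 : ‖z₁ - z₂‖ ^ 2 = (r₁ - r₂) ^ 2 + 2 * r₁ * r₂ * (1 - Real.cos (a₁ - a₂)) := by
    rw [Complex.sq_norm, Complex.normSq_apply, Complex.sub_re,
      Complex.sub_im]
    nlinarith [hn1, hn2, hc]
  -- log part
  have key : ∀ s t : ℝ, 0 < s → 0 < t → (Real.log s - Real.log t) * t ≤ s - t := by
    intro s t hs ht
    have h := Real.log_le_sub_one_of_pos (div_pos hs ht)
    rw [Real.log_div hs.ne' ht.ne'] at h
    calc (Real.log s - Real.log t) * t ≤ (s / t - 1) * t := mul_le_mul_of_nonneg_right h ht.le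
      _ = s - t := by rw [sub_mul, div_mul_cancel₀ _ ht.ne', one_mul]
  have hlog : |Real.log r₁ - Real.log r₂| ≤ |r₁ - r₂| * S := by
    rw [abs_le]
    constructor
    · have h := key r₂ r₁ hr₂ hr₁
      have habs : r₂ - r₁ ≤ |r₁ - r₂| := by rw [abs_sub_comm]; exact le_abs_self _
      nlinarith [abs_nonneg (r₁ - r₂)]
    · have h := key r₁ r₂ hr₁ hr₂
      have habs : r₁ - r₂ ≤ |r₁ - r₂| := le_abs_self _
      nlinarith [abs_nonneg (r₁ - r₂)]
  have p1 : (Real.log r₁ - Real.log r₂) ^ 2 ≤ (r₁ - r₂) ^ 2 * S ^ 2 := by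
    have h := mul_self_le_mul_self (abs_nonneg (Real.log r₁ - Real.log r₂)) hlog
    calc (Real.log r₁ - Real.log r₂) ^ 2
        = |Real.log r₁ - Real.log r₂| * |Real.log r₁ - Real.log r₂| := by
          rw [abs_mul_abs_self]; ring
      _ ≤ (|r₁ - r₂| * S) * (|r₁ - r₂| * S) := h
      _ = (|r₁ - r₂| * |r₁ - r₂|) * (S * S) := by ring
      _ = (r₁ - r₂) ^ 2 * S ^ 2 := by rw [abs_mul_abs_self]; ring
  -- angle part
  have hθ : |a₁ - a₂| < Real.pi := by
    rw [abs_lt]; constructor <;> linarith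
  have key2 : (a₁ - a₂) ^ 2 ≤ 8 * (1 - Real.cos (a₁ - a₂)) := by
    set θ := a₁ - a₂ with hθdef
    have hsin : |θ| / 4 ≤ |Real.sin (θ / 2)| := by
      have hx0 : (0:ℝ) ≤ |θ| / 2 := by positivity
      have hx1 : |θ| / 2 ≤ Real.pi / 2 := by linarith [hθ.le]
      have hms := Real.mul_le_sin hx0 hx1
      have hpi : |θ| / 4 ≤ 2 / Real.pi * (|θ| / 2) := by
        have hpile : Real.pi ≤ 4 := by linarith [Real.pi_le_four]
        rw [div_mul_eq_mul_div, div_le_div_iff₀ (by norm_num) Real.pi_pos]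
        nlinarith [abs_nonneg θ, Real.pi_pos]
      have hθl : -Real.pi < θ := (abs_lt.1 hθ).1
      have hθu : θ < Real.pi := (abs_lt.1 hθ).2
      have habs : Real.sin (|θ| / 2) = |Real.sin (θ / 2)| := by
        rcases abs_cases θ with ⟨h, hpos⟩ | ⟨h, hneg⟩
        · rw [h]
          exact (_root_.abs_of_nonneg (Real.sin_nonneg_of_nonneg_of_le_pi (by linarith)
            (by linarith))).symm
        · rw [h, show -θ / 2 = -(θ / 2) by ring, Real.sin_neg]
          exact (_root_.abs_of_nonpos (Real.sin_nonpos_of_nonpos_of_neg_pi_le (by linarith)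
            (by linarith))).symm
      rw [← habs]
      linarith
    have hsq : Real.sin (θ / 2) ^ 2 = 1 / 2 - Real.cos θ / 2 := by
      have h := Real.sin_sq_eq_half_sub (θ / 2)
      rwa [show 2 * (θ / 2) = θ by ring] at h
    have h2 := mul_self_le_mul_self (by positivity : (0:ℝ) ≤ |θ| / 4) hsin
    rw [abs_mul_abs_self] at h2
    have h3 : |θ| / 4 * (|θ| / 4) = θ ^ 2 / 16 := by
      rw [show |θ| / 4 * (|θ| / 4) = |θ| * |θ| / 16 by ring, abs_mul_abs_self]; ring
    nlinarith
  have hS4 : 4 ≤ r₁ * r₂ * S ^ 2 := by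
    have e : r₁ * r₂ * S ^ 2 = r₂ / r₁ + r₁ / r₂ + 2 := by
      rw [hSdef]; field_simp; ring
    rw [e]
    have : 2 ≤ r₂ / r₁ + r₁ / r₂ := by
      rw [div_add_div _ _ hr₁.ne' hr₂.ne', le_div_iff₀ (by positivity)]
      nlinarith [sq_nonneg (r₁ - r₂)]
    linarith
  have p2 : (a₁ - a₂) ^ 2 ≤ 2 * r₁ * r₂ * (1 - Real.cos (a₁ - a₂)) * S ^ 2 := by
    have hcos : 0 ≤ 1 - Real.cos (a₁ - a₂) := by linarith [Real.cos_le_one (a₁ - a₂)]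
    nlinarith [key2, hS4, hcos]
  have final : ‖Complex.log z₁ - Complex.log z₂‖ ^ 2 ≤ (‖z₁ - z₂‖ * S) ^ 2 := by
    rw [e1, mul_pow, e2]
    nlinarith [p1, p2]
  have h := Real.sqrt_le_sqrt final
  rwa [Real.sqrt_sq (norm_nonneg _), Real.sqrt_sq (by positivity)] at h

lemma integral_inv_sub (z : ℂ) (hz : z.im ≠ 0) :
    (∫ ω in (0:ℝ)..1, ((ω : ℂ) - z)⁻¹) = Complex.log (1 - z) - Complex.log (-z) := by
  have hne : ∀ ω : ℝ, (ω : ℂ) - z ≠ 0 := by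
    intro ω h
    apply hz
    have := congrArg Complex.im h
    simpa using this.symm
  have hderiv : ∀ ω ∈ Set.uIcc (0:ℝ) 1,
      HasDerivAt (fun t : ℝ => Complex.log ((t : ℂ) - z)) (((ω : ℂ) - z)⁻¹) ω := by
    intro ω _
    have hslit : ((ω : ℂ) - z) ∈ Complex.slitPlane := Or.inr (by simpa using hz)
    have h1 : HasDerivAt (fun w : ℂ => Complex.log (w - z)) (((ω : ℂ) - z)⁻¹) (ω : ℂ) := by
      have h2 := (Complex.hasDerivAt_log hslit).comp (ω : ℂ)
        ((hasDerivAt_id ((ω : ℂ))).sub_const z)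
      simp only [mul_one] at h2
      exact h2
    exact h1.comp_ofReal
  have hint : IntervalIntegrable (fun ω : ℝ => ((ω : ℂ) - z)⁻¹) MeasureTheory.volume 0 1 := by
    apply Continuous.intervalIntegrable
    exact (Complex.continuous_ofReal.sub continuous_const).inv₀ hne
  have h := intervalIntegral.integral_eq_sub_of_hasDerivAt hderiv hint
  simpa using h

/-- With `Θ(α,η) = ∫₀¹ dω/(ω − α − iη)` and `Θ(ω₀)` the boundary value
`lim_{η'→0⁺} ∫₀¹ dω/(ω − ω₀ − iη')`, one has
`|Θ(α,η) − Θ(ω₀)| ≤ |ω₀ − α − iη| (1/|1−α−iη| + 1/|1−ω₀| + 1/|α+iη| + 1/|ω₀|)`. -/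
theorem theta_difference_bound (α η ω₀ : ℝ) (hη : 0 < η)
    (hω₀ : ω₀ ∈ Set.Ioo (0 : ℝ) 1) (L : ℂ)
    (hL : Tendsto (fun η' : ℝ => ∫ ω in (0 : ℝ)..1, ((ω : ℂ) - ω₀ - Complex.I * η')⁻¹)
      (nhdsWithin 0 (Set.Ioi 0)) (nhds L)) :
    ‖(∫ ω in (0 : ℝ)..1, ((ω : ℂ) - α - Complex.I * η)⁻¹) - L‖ ≤
      ‖(ω₀ : ℂ) - α - Complex.I * η‖ *
        (1 / ‖(1 : ℂ) - α - Complex.I * η‖ + 1 / |1 - ω₀| +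
          1 / ‖(α : ℂ) + Complex.I * η‖ + 1 / |ω₀|) := by
  obtain ⟨hω₀0, hω₀1⟩ := hω₀
  set z : ℂ := (α : ℂ) + Complex.I * η with hzdef
  have hzim : z.im = η := by simp [hzdef]
  -- value of Θ(α,η)
  have hΘ : (∫ ω in (0 : ℝ)..1, ((ω : ℂ) - α - Complex.I * η)⁻¹)
      = Complex.log (1 - z) - Complex.log (-z) := by
    have : (fun ω : ℝ => ((ω : ℂ) - α - Complex.I * η)⁻¹)
        = fun ω : ℝ => ((ω : ℂ) - z)⁻¹ := by
      funext ω; rw [hzdef]; ring_nf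
    rw [this]
    exact integral_inv_sub z (by rw [hzim]; exact hη.ne')
  -- value of the approximants
  have hf : ∀ η' : ℝ, 0 < η' →
      (∫ ω in (0 : ℝ)..1, ((ω : ℂ) - ω₀ - Complex.I * η')⁻¹)
        = Complex.log (1 - ((ω₀ : ℂ) + Complex.I * η'))
          - Complex.log (-((ω₀ : ℂ) + Complex.I * η')) := by
    intro η' hη'
    have : (fun ω : ℝ => ((ω : ℂ) - ω₀ - Complex.I * η')⁻¹)
        = fun ω : ℝ => ((ω : ℂ) - ((ω₀ : ℂ) + Complex.I * η'))⁻¹ := by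
      funext ω; ring_nf
    rw [this]
    exact integral_inv_sub _ (by simpa using hη'.ne')
  -- the bound function
  set g : ℝ → ℝ := fun η' =>
    ‖((ω₀ : ℂ) + Complex.I * η') - z‖ *
      (1 / ‖1 - z‖ + 1 / ‖1 - ((ω₀ : ℂ) + Complex.I * η')‖ +
        1 / ‖z‖ + 1 / ‖(ω₀ : ℂ) + Complex.I * η'‖) with hgdef
  -- eventual bound
  have hev : ∀ᶠ (η' : ℝ) in nhdsWithin (0:ℝ) (Set.Ioi 0),
      ‖(∫ ω in (0 : ℝ)..1, ((ω : ℂ) - α - Complex.I * η)⁻¹)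
        - (∫ ω in (0 : ℝ)..1, ((ω : ℂ) - ω₀ - Complex.I * η')⁻¹)‖ ≤ g η' := by
    filter_upwards [self_mem_nhdsWithin] with η' hη'
    have hη' : (0:ℝ) < η' := hη'
    set w : ℂ := (ω₀ : ℂ) + Complex.I * η' with hwdef
    rw [hΘ, hf η' hη']
    have hrear : (Complex.log (1 - z) - Complex.log (-z))
        - (Complex.log (1 - w) - Complex.log (-w))
        = (Complex.log (1 - z) - Complex.log (1 - w))
          - (Complex.log (-z) - Complex.log (-w)) := by ring
    rw [hrear]
    have him1 : (1 - z).im < 0 := by simp [hzdef]; exact hη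
    have him2 : (1 - w).im < 0 := by simp [hwdef]; exact hη'
    have him3 : (-z).im < 0 := by simp [hzdef]; exact hη
    have him4 : (-w).im < 0 := by simp [hwdef]; exact hη'
    have h1 := log_lip him1 him2
    have h2 := log_lip him3 him4
    have he1 : (1 - z) - (1 - w) = w - z := by ring
    have he2 : (-z) - (-w) = w - z := by ring
    rw [he1] at h1
    rw [he2] at h2
    have hnz : ‖-z‖ = ‖z‖ := norm_neg z
    have hnw : ‖-w‖ = ‖w‖ := norm_neg w
    rw [hnz, hnw] at h2
    calc ‖(Complex.log (1 - z) - Complex.log (1 - w))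
          - (Complex.log (-z) - Complex.log (-w))‖
        ≤ ‖Complex.log (1 - z) - Complex.log (1 - w)‖
          + ‖Complex.log (-z) - Complex.log (-w)‖ := norm_sub_le _ _
      _ ≤ ‖w - z‖ * (1 / ‖1 - z‖ + 1 / ‖1 - w‖)
          + ‖w - z‖ * (1 / ‖z‖ + 1 / ‖w‖) := add_le_add h1 h2
      _ = g η' := by rw [hgdef]; ring
  -- convergence of the left side
  have hlhs : Tendsto (fun η' : ℝ =>
      ‖(∫ ω in (0 : ℝ)..1, ((ω : ℂ) - α - Complex.I * η)⁻¹)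
        - (∫ ω in (0 : ℝ)..1, ((ω : ℂ) - ω₀ - Complex.I * η')⁻¹)‖)
      (nhdsWithin (0:ℝ) (Set.Ioi 0))
      (nhds ‖(∫ ω in (0 : ℝ)..1, ((ω : ℂ) - α - Complex.I * η)⁻¹) - L‖) :=
    (tendsto_const_nhds.sub hL).norm
  -- convergence of the bound
  have hg0 : g 0 = ‖(ω₀ : ℂ) - α - Complex.I * η‖ *
      (1 / ‖(1 : ℂ) - α - Complex.I * η‖ + 1 / |1 - ω₀| +
        1 / ‖(α : ℂ) + Complex.I * η‖ + 1 / |ω₀|) := by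
    rw [hgdef]
    have e1 : ((ω₀ : ℂ) + Complex.I * (0:ℝ)) - z = (ω₀ : ℂ) - α - Complex.I * η := by
      rw [hzdef]; push_cast; ring
    have e2 : (1:ℂ) - ((ω₀ : ℂ) + Complex.I * (0:ℝ)) = ((1 - ω₀ : ℝ) : ℂ) := by
      push_cast; ring
    have e3 : ((ω₀ : ℂ) + Complex.I * (0:ℝ)) = ((ω₀ : ℝ) : ℂ) := by push_cast; ring
    have e4 : (1:ℂ) - z = (1 : ℂ) - α - Complex.I * η := by rw [hzdef]; ring
    simp only [e1, e2, e3, e4, Complex.norm_real, Real.norm_eq_abs]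
    rw [hzdef, sub_add_eq_sub_sub,
      show (1:ℂ) - (ω₀ : ℂ) = ((1 - ω₀ : ℝ) : ℂ) from by push_cast; ring,
      Complex.norm_real, Real.norm_eq_abs]
  have hgc : Tendsto g (nhdsWithin (0:ℝ) (Set.Ioi 0)) (nhds (g 0)) := by
    apply ContinuousAt.continuousWithinAt
    rw [hgdef]
    have hc1 : Continuous fun η' : ℝ => ((ω₀ : ℂ) + Complex.I * η') :=
      continuous_const.add (continuous_const.mul Complex.continuous_ofReal)
    have hd2 : ‖(1:ℂ) - ((ω₀ : ℂ) + Complex.I * (0:ℝ))‖ ≠ 0 := by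
      simp only [norm_ne_zero_iff]
      intro h
      have := congrArg Complex.re h
      simp at this
      linarith
    have hd4 : ‖((ω₀ : ℂ) + Complex.I * (0:ℝ))‖ ≠ 0 := by
      simp only [norm_ne_zero_iff]
      intro h
      have := congrArg Complex.re h
      simp at this
      linarith
    apply ContinuousAt.mul
    · exact ((hc1.sub continuous_const).norm).continuousAt
    · apply ContinuousAt.add
      apply ContinuousAt.add
      apply ContinuousAt.add
      · exact continuousAt_const
      · exact (continuousAt_const.div
          ((continuous_const.sub hc1).norm.continuousAt) hd2)
      · exact continuousAt_const
      · exact (continuousAt_const.div (hc1.norm.continuousAt) hd4)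
  rw [← hg0]
  exact le_of_tendsto_of_tendsto hlhs hgc hev
end
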